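/- For all x > 0, (sinh x)/x < (2 + cosh x)/3. -/
import Mathlib

open Real Set

private lemma aux1 (x : ℝ) (hx : 0 < x) : Real.sinh x < x * Real.cosh x := by
  have key : StrictMonoOn (fun y : ℝ => y * Real.cosh y - Real.sinh y) (Ici 0) := by
    apply strictMonoOn_of_deriv_pos (convex_Ici 0)
    · fun_prop
    · intro y hy
      simp only [interior_Ici, mem_Ioi] at hy
      have h1 : HasDerivAt (fun y : ℝ => y * Real.cosh y - Real.sinh y)
          (1 * Real.cosh y + y * Real.sinh y - Real.cosh y) y :=
        ((hasDerivAt_id y).mul (Real.hasDerivAt_cosh y)).sub (Real.hasDerivAt_sinh y)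
      rw [h1.deriv]
      have : 0 < Real.sinh y := by rwa [Real.sinh_pos_iff]
      nlinarith
  have h := key self_mem_Ici (mem_Ici.mpr hx.le) hx
  simp only [Real.sinh_zero, Real.cosh_zero] at h
  linarith

private lemma aux2 (x : ℝ) (hx : 0 < x) :
    0 < 2 - 2 * Real.cosh x + x * Real.sinh x := by
  have key : StrictMonoOn (fun y : ℝ => 2 - 2 * Real.cosh y + y * Real.sinh y) (Ici 0) := by
    apply strictMonoOn_of_deriv_pos (convex_Ici 0)
    · fun_prop
    · intro y hy
      simp only [interior_Ici, mem_Ioi] at hy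
      have h1 : HasDerivAt (fun y : ℝ => 2 - 2 * Real.cosh y + y * Real.sinh y)
          (0 - 2 * Real.sinh y + (1 * Real.sinh y + y * Real.cosh y)) y :=
        ((hasDerivAt_const y 2).sub ((hasDerivAt_const y 2).mul (Real.hasDerivAt_cosh y)
          |>.congr_deriv (by ring))).add ((hasDerivAt_id y).mul (Real.hasDerivAt_sinh y))
      rw [h1.deriv]
      have := aux1 y hy
      nlinarith
  have h := key self_mem_Ici (mem_Ici.mpr hx.le) hx
  simp only [Real.sinh_zero, Real.cosh_zero] at h
  linarith

theorem stmt_1 (x : ℝ) (hx : 0 < x) :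
    Real.sinh x / x < (2 + Real.cosh x) / 3 := by
  have key : StrictMonoOn (fun y : ℝ => y * (2 + Real.cosh y) - 3 * Real.sinh y) (Ici 0) := by
    apply strictMonoOn_of_deriv_pos (convex_Ici 0)
    · fun_prop
    · intro y hy
      simp only [interior_Ici, mem_Ioi] at hy
      have h1 : HasDerivAt (fun y : ℝ => y * (2 + Real.cosh y) - 3 * Real.sinh y)
          (1 * (2 + Real.cosh y) + y * (0 + Real.sinh y) -
            (0 * Real.sinh y + 3 * Real.cosh y)) y :=
        ((hasDerivAt_id y).mul ((hasDerivAt_const y 2).add (Real.hasDerivAt_cosh y))).sub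
          ((hasDerivAt_const y 3).mul (Real.hasDerivAt_sinh y))
      rw [h1.deriv]
      have := aux2 y hy
      nlinarith
  have h := key self_mem_Ici (mem_Ici.mpr hx.le) hx
  simp only [Real.sinh_zero, Real.cosh_zero] at h
  rw [div_lt_div_iff₀ hx (by norm_num)]
  nlinarith
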